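/- Output-sum identity for the bidirectional recurrences: for every i with 1 ≤ i ≤ L, the corrected forward and backward outputs satisfy y^F_i + y^B_i = Σ_{j=1}^{L} M_{ij} ⟨q_i, k_j⟩ v_j; i.e., the sum of the two corrected recurrent outputs equals the i-th row of (Q K^⊤ ⊙ M) V. -/

import Mathlib

open Matrix Finset

/-- Bidirectional decay mask: `M i j = ∏_{t=j+1}^{i} λ_t` for `i > j`,
`M i i = 1`, and `M i j = ∏_{t=i+1}^{j} λ_t` for `i < j`. -/
noncomputable def bidirMask (lam : ℕ → ℝ) (i j : ℕ) : ℝ :=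
  if j < i then ∏ t ∈ Finset.Icc (j + 1) i, lam t
  else if i < j then ∏ t ∈ Finset.Icc (i + 1) j, lam t
  else 1

private lemma vecMul_sumMat {d : ℕ} (q : Fin d → ℝ) (s : Finset ℕ)
    (A : ℕ → Matrix (Fin d) (Fin d) ℝ) :
    q ᵥ* (∑ j ∈ s, A j) = ∑ j ∈ s, q ᵥ* A j := by
  classical
  induction s using Finset.induction with
  | empty => simp [Matrix.vecMul_zero]
  | insert a s h ih => simp [Finset.sum_insert h, Matrix.vecMul_add, ih]

private lemma vecMul_smulMat {d : ℕ} (q : Fin d → ℝ) (c : ℝ)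
    (M : Matrix (Fin d) (Fin d) ℝ) :
    q ᵥ* (c • M) = c • (q ᵥ* M) := by
  ext j
  simp [Matrix.vecMul, dotProduct, Finset.mul_sum, mul_left_comm]

private lemma vecMul_vecMulVec' {d : ℕ} (q k v : Fin d → ℝ) :
    q ᵥ* vecMulVec k v = (q ⬝ᵥ k) • v := by
  ext j
  simp [Matrix.vecMul, dotProduct, Matrix.vecMulVec_apply, Finset.sum_mul, mul_assoc]

/-- Output-sum identity for the bidirectional recurrences:
`y^F_i + y^B_i = Σ_{j=1}^{L} M_{ij} ⟨q_i, k_j⟩ v_j`, i.e. the sum of the corrected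
recurrent outputs equals the `i`-th row of `(Q K^⊤ ⊙ M) V`. -/
theorem output_sum_identity
    (L d : ℕ) (hL : 0 < L) (hd : 0 < d)
    (lam : ℕ → ℝ) (q k v : ℕ → (Fin d → ℝ))
    (SF SB : ℕ → Matrix (Fin d) (Fin d) ℝ)
    (hSF0 : SF 0 = 0)
    (hSF : ∀ i, 1 ≤ i → i ≤ L → SF i = lam i • SF (i - 1) + vecMulVec (k i) (v i))
    (hSBL : SB L = vecMulVec (k L) (v L))
    (hSB : ∀ i, 1 ≤ i → i < L → SB i = lam (i + 1) • SB (i + 1) + vecMulVec (k i) (v i))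
    (yF yB : ℕ → (Fin d → ℝ))
    (hyF : ∀ i, yF i = q i ᵥ* SF i - ((1 / 2) * (q i ⬝ᵥ k i)) • v i)
    (hyB : ∀ i, yB i = q i ᵥ* SB i - ((1 / 2) * (q i ⬝ᵥ k i)) • v i) :
    ∀ i, 1 ≤ i → i ≤ L →
      yF i + yB i = ∑ j ∈ Finset.Icc 1 L, (bidirMask lam i j * (q i ⬝ᵥ k j)) • v j := by
  -- closed form for the forward state
  have hSFsum : ∀ i, i ≤ L →
      SF i = ∑ j ∈ Finset.Icc 1 i,
        (∏ t ∈ Finset.Icc (j + 1) i, lam t) • vecMulVec (k j) (v j) := by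
    intro i
    induction i with
    | zero => intro _; simp [hSF0]
    | succ n ih =>
      intro hn
      rw [hSF (n + 1) (by omega) hn]
      simp only [Nat.add_sub_cancel]
      rw [ih (by omega), Finset.smul_sum, Finset.sum_Icc_succ_top (by omega)]
      have h1 : (∏ t ∈ Finset.Icc (n + 1 + 1) (n + 1), lam t) = 1 := by
        rw [Finset.Icc_eq_empty (by omega)]; simp
      rw [h1, one_smul]
      congr 1
      refine Finset.sum_congr rfl ?_
      intro j hj
      have hj' : j ≤ n := (Finset.mem_Icc.mp hj).2
      rw [smul_smul, Finset.prod_Icc_succ_top (by omega), mul_comm]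
  -- closed form for the backward state
  have hSBsum : ∀ n i, 1 ≤ i → i ≤ L → L - i = n →
      SB i = ∑ j ∈ Finset.Icc i L,
        (∏ t ∈ Finset.Icc (i + 1) j, lam t) • vecMulVec (k j) (v j) := by
    intro n
    induction n with
    | zero =>
      intro i h1 h2 h3
      have : i = L := by omega
      subst this
      rw [hSBL, Finset.Icc_self, Finset.sum_singleton,
        Finset.Icc_eq_empty (by omega)]
      simp
    | succ n ih =>
      intro i h1 h2 h3
      have hi : i < L := by omega
      rw [hSB i h1 hi, ih (i + 1) (by omega) (by omega) (by omega), Finset.smul_sum]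
      rw [← Finset.Ioc_insert_left hi.le, Finset.sum_insert (by simp),
        Finset.Icc_eq_empty (show ¬ i + 1 ≤ i by omega)]
      simp only [Finset.prod_empty, one_smul]
      rw [show Finset.Ioc i L = Finset.Icc (i + 1) L from (Finset.Icc_add_one_left_eq_Ioc i L).symm]
      rw [add_comm]
      congr 1
      refine Finset.sum_congr rfl ?_
      intro j hj
      have hj' : i + 1 ≤ j := (Finset.mem_Icc.mp hj).1
      rw [smul_smul, ← Finset.mul_prod_Ioc_eq_prod_Icc hj', Finset.Icc_add_one_left_eq_Ioc]
  intro i h1 h2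
  rw [hyF, hyB, hSFsum i h2, hSBsum (L - i) i h1 h2 rfl,
    vecMul_sumMat, vecMul_sumMat]
  simp only [vecMul_smulMat, vecMul_vecMulVec', smul_smul]
  -- split the backward sum at j = i
  rw [show Finset.Icc i L = insert i (Finset.Ioc i L) from (Finset.Ioc_insert_left h2).symm,
    Finset.sum_insert (by simp), Finset.Icc_eq_empty (show ¬ i + 1 ≤ i by omega)]
  have hsplit : Finset.Icc 1 L = Finset.Icc 1 i ∪ Finset.Ioc i L := by
    ext a
    simp only [Finset.mem_Icc, Finset.mem_union, Finset.mem_Ioc]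
    omega
  have hdisj : Disjoint (Finset.Icc 1 i) (Finset.Ioc i L) := by
    rw [Finset.disjoint_left]
    intro a ha hb
    simp only [Finset.mem_Icc] at ha
    simp only [Finset.mem_Ioc] at hb
    omega
  have hmask1 : ∀ j ∈ Finset.Icc 1 i,
      (bidirMask lam i j * (q i ⬝ᵥ k j)) • v j
        = ((∏ t ∈ Finset.Icc (j + 1) i, lam t) * (q i ⬝ᵥ k j)) • v j := by
    intro j hj
    have hj' : j ≤ i := (Finset.mem_Icc.mp hj).2
    rcases lt_or_eq_of_le hj' with h | h
    · simp [bidirMask, h]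
    · subst h
      simp [bidirMask, Finset.Icc_eq_empty (show ¬ j + 1 ≤ j by omega)]
  have hmask2 : ∀ j ∈ Finset.Ioc i L,
      (bidirMask lam i j * (q i ⬝ᵥ k j)) • v j
        = ((∏ t ∈ Finset.Icc (i + 1) j, lam t) * (q i ⬝ᵥ k j)) • v j := by
    intro j hj
    have hj' : i < j := (Finset.mem_Ioc.mp hj).1
    simp [bidirMask, hj', Nat.lt_asymm hj']
  rw [hsplit, Finset.sum_union hdisj,
    Finset.sum_congr rfl hmask1, Finset.sum_congr rfl hmask2]
  simp only [Finset.prod_empty, one_mul]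
  have hhalf : ((1 / 2 : ℝ) * (q i ⬝ᵥ k i)) • v i + ((1 / 2 : ℝ) * (q i ⬝ᵥ k i)) • v i
      = (q i ⬝ᵥ k i) • v i := by
    rw [← add_smul]; ring_nf
  rw [← hhalf]
  abel
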